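/- Let W be a real n×c matrix with WᵀW invertible and W† = (WᵀW)⁻¹Wᵀ, and let F : ℝᶜ → ℝ²ⁿ be the ReLU injective layer F(x) = (ReLU(Wx), ReLU(−Wx)). Let ε : Ω → ℝ²ⁿ be a random vector with independent, square-integrable coordinates of mean 0 and variance σ². For x ∈ ℝᶜ set y' = F(x) + ε and x' = W†(y'₁ − y'₂), where y'₁, y'₂ are the first and last n coordinates of y'. Then the expected inversion error satisfies E[‖x' − x‖²] = 2σ² Tr((WᵀW)⁻¹). -/

import Mathlib

open Matrix MeasureTheory ProbabilityTheory

lemma memLp_two_integrable_mul' {Ω : Type*} [MeasurableSpace Ω] {μ : Measure Ω} {f g : Ω → ℝ}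
    (hf : MemLp f 2 μ) (hg : MemLp g 2 μ) : Integrable (fun ω => f ω * g ω) μ := by
  have h := L2.integrable_inner (𝕜 := ℝ) (hf.toLp f) (hg.toLp g)
  refine h.congr ?_
  filter_upwards [hf.coeFn_toLp, hg.coeFn_toLp] with ω h1 h2
  simp [h1, h2, RCLike.inner_apply, RCLike.star_def, mul_comm]

/-- ReLU injective layer inversion error. With `F(x) = (ReLU(Wx), ReLU(-Wx))`,
`y' = F(x) + ε` (with `ε : Ω → ℝ²ⁿ` having independent, square-integrable, mean-zero
coordinates of variance `σ²`) and `x' = W†(y'₁ - y'₂)`, the expected squared Euclidean error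
is `E[‖x' - x‖²] = 2σ² Tr((WᵀW)⁻¹)`. -/
theorem relu_layer_inversion_error {Ω : Type*} [MeasureSpace Ω]
    [IsProbabilityMeasure (ℙ : Measure Ω)]
    (n c : ℕ) (W : Matrix (Fin n) (Fin c) ℝ) (hW : IsUnit (Wᵀ * W).det)
    (Wdag : Matrix (Fin c) (Fin n) ℝ) (hWdag : Wdag = (Wᵀ * W)⁻¹ * Wᵀ)
    (F : (Fin c → ℝ) → (Fin n ⊕ Fin n → ℝ))
    (hF : ∀ x, F x =
      Sum.elim (fun i => max (W.mulVec x i) 0) (fun i => max (-(W.mulVec x i)) 0))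
    (ε : Ω → Fin n ⊕ Fin n → ℝ) (σ : ℝ)
    (hindep : iIndepFun (fun i ω => ε ω i) ℙ)
    (hL2 : ∀ i, MemLp (fun ω => ε ω i) 2 ℙ)
    (hmean : ∀ i, ∫ ω, ε ω i = 0)
    (hvar : ∀ i, ∫ ω, (ε ω i) ^ 2 = σ ^ 2)
    (x : Fin c → ℝ) (y' : Ω → Fin n ⊕ Fin n → ℝ) (hy' : ∀ ω, y' ω = F x + ε ω)
    (x' : Ω → Fin c → ℝ)
    (hx' : ∀ ω, x' ω = Wdag.mulVec (fun i => y' ω (Sum.inl i) - y' ω (Sum.inr i))) :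
    ∫ ω, ∑ i, (x' ω i - x i) ^ 2 = 2 * σ ^ 2 * (Wᵀ * W)⁻¹.trace := by
  set δ : Ω → Fin n → ℝ := fun ω j => ε ω (Sum.inl j) - ε ω (Sum.inr j) with hδ
  -- x' ω - x = Wdag.mulVec (δ ω)
  have hxx : ∀ ω i, x' ω i - x i = Wdag.mulVec (δ ω) i := by
    intro ω i
    have h1 : (fun j => y' ω (Sum.inl j) - y' ω (Sum.inr j)) = W.mulVec x + δ ω := by
      funext j
      simp only [hy', hF, Pi.add_apply, Sum.elim_inl, Sum.elim_inr, hδ]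
      rcases le_total (W.mulVec x j) 0 with h | h
      · rw [max_eq_right h, max_eq_left (by linarith)]; ring
      · rw [max_eq_left h, max_eq_right (by linarith)]; ring
    have h2 : Wdag.mulVec (W.mulVec x) = x := by
      rw [Matrix.mulVec_mulVec, hWdag, Matrix.mul_assoc, Matrix.nonsing_inv_mul _ hW,
        Matrix.one_mulVec]
    rw [hx' ω, h1, Matrix.mulVec_add, h2]
    simp
  -- covariance of ε coordinates
  have hIntε : ∀ a b, Integrable (fun ω => ε ω a * ε ω b) ℙ :=
    fun a b => memLp_two_integrable_mul' (hL2 a) (hL2 b)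
  have hcov : ∀ a b, a ≠ b → ∫ ω, ε ω a * ε ω b = 0 := by
    intro a b hab
    have hind : IndepFun (fun ω => ε ω a) (fun ω => ε ω b) ℙ := hindep.indepFun hab
    have := hind.integral_fun_mul_eq_mul_integral (hL2 a).aestronglyMeasurable
      (hL2 b).aestronglyMeasurable
    simpa [hmean a, hmean b] using this
  have hvar' : ∀ a, ∫ ω, ε ω a * ε ω a = σ ^ 2 := by
    intro a
    have := hvar a
    simpa [pow_two] using this
  -- covariance of δ
  have hδL2 : ∀ j, MemLp (fun ω => δ ω j) 2 ℙ := fun j => (hL2 _).sub (hL2 _)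
  have hδint : ∀ j k, Integrable (fun ω => δ ω j * δ ω k) ℙ :=
    fun j k => memLp_two_integrable_mul' (hδL2 j) (hδL2 k)
  have hδcov : ∀ j k, ∫ ω, δ ω j * δ ω k = if j = k then 2 * σ ^ 2 else 0 := by
    intro j k
    have expand : ∀ ω, δ ω j * δ ω k =
        ε ω (Sum.inl j) * ε ω (Sum.inl k) - ε ω (Sum.inl j) * ε ω (Sum.inr k)
        - ε ω (Sum.inr j) * ε ω (Sum.inl k) + ε ω (Sum.inr j) * ε ω (Sum.inr k) := by
      intro ω; simp only [hδ]; ring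
    rw [show (fun ω => δ ω j * δ ω k) = fun ω =>
        ε ω (Sum.inl j) * ε ω (Sum.inl k) - ε ω (Sum.inl j) * ε ω (Sum.inr k)
        - ε ω (Sum.inr j) * ε ω (Sum.inl k) + ε ω (Sum.inr j) * ε ω (Sum.inr k)
      from funext expand]
    have I1 : Integrable (fun ω => ε ω (Sum.inl j) * ε ω (Sum.inl k)
        - ε ω (Sum.inl j) * ε ω (Sum.inr k) - ε ω (Sum.inr j) * ε ω (Sum.inl k)) ℙ :=
      ((hIntε _ _).sub (hIntε _ _)).sub (hIntε _ _)
    have I2 : Integrable (fun ω => ε ω (Sum.inl j) * ε ω (Sum.inl k)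
        - ε ω (Sum.inl j) * ε ω (Sum.inr k)) ℙ := (hIntε _ _).sub (hIntε _ _)
    rw [integral_add I1 (hIntε _ _), integral_sub I2 (hIntε _ _),
      integral_sub (hIntε _ _) (hIntε _ _)]
    rw [hcov (Sum.inl j) (Sum.inr k) (by simp), hcov (Sum.inr j) (Sum.inl k) (by simp)]
    by_cases h : j = k
    · subst h; rw [hvar', hvar']; simp [two_mul]
    · rw [hcov (Sum.inl j) (Sum.inl k) (by simp [h]), hcov (Sum.inr j) (Sum.inr k) (by simp [h])]
      simp [h]
  -- expand the integrand
  have key : ∀ ω, ∑ i, (x' ω i - x i) ^ 2 =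
      ∑ i, ∑ j, ∑ k, (Wdag i j * Wdag i k) * (δ ω j * δ ω k) := by
    intro ω
    refine Finset.sum_congr rfl fun i _ => ?_
    rw [hxx ω i]
    simp only [Matrix.mulVec, dotProduct, pow_two, Finset.sum_mul_sum]
    exact Finset.sum_congr rfl fun j _ => Finset.sum_congr rfl fun k _ => by ring
  calc ∫ ω, ∑ i, (x' ω i - x i) ^ 2
      = ∫ ω, ∑ i, ∑ j, ∑ k, (Wdag i j * Wdag i k) * (δ ω j * δ ω k) := by
        simp only [key]
    _ = ∑ i, ∑ j, ∑ k, (Wdag i j * Wdag i k) * ∫ ω, δ ω j * δ ω k := by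
        rw [integral_finset_sum _ fun i _ =>
          integrable_finset_sum _ fun j _ => integrable_finset_sum _ fun k _ =>
            (hδint j k).const_mul _]
        refine Finset.sum_congr rfl fun i _ => ?_
        rw [integral_finset_sum _ fun j _ => integrable_finset_sum _ fun k _ =>
          (hδint j k).const_mul _]
        refine Finset.sum_congr rfl fun j _ => ?_
        rw [integral_finset_sum _ fun k _ => (hδint j k).const_mul _]
        exact Finset.sum_congr rfl fun k _ => integral_const_mul _ _
    _ = ∑ i, ∑ j, Wdag i j * Wdag i j * (2 * σ ^ 2) := by
        refine Finset.sum_congr rfl fun i _ => Finset.sum_congr rfl fun j _ => ?_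
        simp only [hδcov, mul_ite, mul_zero]
        rw [Finset.sum_ite_eq]
        simp
    _ = 2 * σ ^ 2 * (Wdag * Wdagᵀ).trace := by
        simp only [Matrix.trace, Matrix.diag, Matrix.mul_apply, Matrix.transpose_apply,
          Finset.mul_sum]
        refine Finset.sum_congr rfl fun i _ => Finset.sum_congr rfl fun j _ => by ring
    _ = 2 * σ ^ 2 * (Wᵀ * W)⁻¹.trace := by
        congr 1
        have hsym : (Wᵀ * W)ᵀ = Wᵀ * W := by
          rw [Matrix.transpose_mul, Matrix.transpose_transpose]
        have : Wdag * Wdagᵀ = (Wᵀ * W)⁻¹ := by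
          rw [hWdag, Matrix.transpose_mul, Matrix.transpose_nonsing_inv, hsym,
            Matrix.transpose_transpose]
          rw [Matrix.mul_assoc, ← Matrix.mul_assoc Wᵀ W (Wᵀ * W)⁻¹,
            Matrix.mul_nonsing_inv _ hW, Matrix.mul_one]
        rw [this]
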